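/- For finite N, the group U^N(n) = {(Φ, q) ∈ U(n) × S¹ : det(Φ)² = q^N} is connected if and only if N is odd. -/

import Mathlib

open Complex

@[reducible]
noncomputable def mxCStar {n : ℕ} : CStarAlgebra (Matrix (Fin n) (Fin n) ℂ) :=
  open scoped Matrix.Norms.L2Operator in { }

lemma abs_one_mem_slitPlane {x : ℂ} (h1 : ‖x‖ = 1) (hne : x ≠ -1) :
    x ∈ Complex.slitPlane := by
  rw [Complex.mem_slitPlane_iff]
  by_cases him : x.im = 0
  · left
    have : |x.re| = 1 := by
      have h := Complex.norm_def (z := x)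
      rw [Complex.normSq_apply, him] at h
      simp only [mul_zero, add_zero] at h
      rw [h1, Real.sqrt_mul_self_eq_abs] at h
      exact h.symm
    rcases abs_eq (by norm_num : (0:ℝ) ≤ 1) |>.mp this with h | h
    · rw [h]; norm_num
    · exfalso; apply hne; apply Complex.ext <;> simp [h, him]
  · right; exact him

lemma exp_arg_of_abs_one {x : ℂ} (h1 : ‖x‖ = 1) :
    Complex.exp ((Complex.arg x : ℂ) * I) = x := by
  have := Complex.norm_mul_exp_arg_mul_I x
  rwa [h1, Complex.ofReal_one, one_mul] at this

section PC
variable {n : ℕ}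
attribute [local instance] mxCStar

lemma exists_avoid (u : Matrix (Fin n) (Fin n) ℂ) :
    ∃ z : ℂ, ‖z‖ = 1 ∧ z ∉ spectrum ℂ u := by
  have hfin : (spectrum ℂ u).Finite := Matrix.finite_spectrum u
  have hio : (Set.Ioo (0:ℝ) 1).Infinite := Set.Ioo_infinite (by norm_num)
  have hinj : Set.InjOn (fun x : ℝ => Complex.exp (x * I)) (Set.Ioo 0 1) := by
    intro a ha b hb hab
    simp only [Complex.exp_eq_exp_iff_exists_int] at hab
    obtain ⟨m, hm⟩ := hab
    have h2 : ((a : ℂ)) * I = ((b + (m:ℝ) * (2*Real.pi) : ℝ) : ℂ) * I := by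
      push_cast
      linear_combination hm
    have h3 := mul_right_cancel₀ I_ne_zero h2
    have h4 : a = b + (m:ℝ) * (2*Real.pi) := by exact_mod_cast h3
    have hm0 : m = 0 := by
      rcases lt_trichotomy m 0 with h | h | h
      · have : (m:ℝ) ≤ -1 := by exact_mod_cast (by omega : m ≤ -1)
        nlinarith [Real.pi_gt_three, ha.1, ha.2, hb.1, hb.2]
      · exact h
      · have : (1:ℝ) ≤ (m:ℝ) := by exact_mod_cast h
        nlinarith [Real.pi_gt_three, ha.1, ha.2, hb.1, hb.2]
    rw [hm0] at h4; push_cast at h4; linarith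
  obtain ⟨z, hz, hzs⟩ := (hio.image hinj).exists_notMem_finite hfin
  obtain ⟨x, -, rfl⟩ := hz
  exact ⟨_, Complex.norm_exp_ofReal_mul_I x, hzs⟩

lemma abs_one_of_mem_spectrum {u : Matrix (Fin n) (Fin n) ℂ}
    (hu : u ∈ unitary (Matrix (Fin n) (Fin n) ℂ)) {w : ℂ} (hw : w ∈ spectrum ℂ u) :
    ‖w‖ = 1 := by
  have hmem : w ∈ unitary ℂ := spectrum_subset_unitary_of_mem_unitary hu hw
  have h1 : (starRingEnd ℂ) w * w = 1 := Unitary.star_mul_self_of_mem hmem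
  have h2 : Complex.normSq w = 1 := by
    have h1' : w * (starRingEnd ℂ) w = 1 := by rw [mul_comm]; exact h1
    rw [Complex.mul_conj] at h1'
    exact_mod_cast h1'
  rw [Complex.norm_def, h2, Real.sqrt_one]

lemma exists_theta (u : Matrix (Fin n) (Fin n) ℂ)
    (hu : u ∈ unitary (Matrix (Fin n) (Fin n) ℂ)) :
    ∃ θ : ℂ → ℝ, ContinuousOn θ (spectrum ℂ u) ∧
      ∀ w ∈ spectrum ℂ u, Complex.exp ((θ w : ℂ) * I) = w := by
  obtain ⟨z, hz1, hz⟩ := exists_avoid u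
  refine ⟨fun w => Complex.arg (-z) + Complex.arg (-(w/z)), ?_, ?_⟩
  · intro w hw
    apply ContinuousAt.continuousWithinAt
    apply ContinuousAt.add continuousAt_const
    have harg : ContinuousAt Complex.arg (-(w/z)) := by
      apply Complex.continuousAt_arg
      apply abs_one_mem_slitPlane
      · rw [norm_neg, norm_div, hz1, abs_one_of_mem_spectrum hu hw, div_one]
      · intro hcon
        apply hz
        have hz0 : z ≠ 0 := fun h => by rw [h] at hz1; simp at hz1
        have : w = z := by
          have : w / z = 1 := by
            have := congrArg Neg.neg hcon
            simpa using this
          field_simp at this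
          exact this
        rwa [← this]
    have hf : ContinuousAt (fun x : ℂ => -(x / z)) w := by fun_prop
    exact ContinuousAt.comp (x := w) harg hf
  · intro w hw
    have hz0 : z ≠ 0 := fun h => by rw [h] at hz1; simp at hz1
    have hw1 : ‖w‖ = 1 := abs_one_of_mem_spectrum hu hw
    push_cast
    rw [add_mul, Complex.exp_add, exp_arg_of_abs_one (by rw [norm_neg, hz1]),
      exp_arg_of_abs_one (by rw [norm_neg, norm_div, hw1, hz1, div_one])]
    field_simp

lemma joined_one (u : unitary (Matrix (Fin n) (Fin n) ℂ)) :
    Joined (1 : unitary (Matrix (Fin n) (Fin n) ℂ)) u := by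
  obtain ⟨u, hu⟩ := u
  have hnorm : IsStarNormal u := isStarNormal_of_mem_unitary hu
  obtain ⟨θ, hθc, hθ⟩ := exists_theta u hu
  have hθr : Continuous ((spectrum ℂ u).restrict θ) :=
    continuousOn_iff_continuous_restrict.mp hθc
  set F : ℝ → C(spectrum ℂ u, ℂ) := fun t =>
    ⟨fun w => Complex.exp ((t : ℂ) * (θ w : ℂ) * I), by
      apply Complex.continuous_exp.comp
      exact (continuous_const.mul (Complex.continuous_ofReal.comp hθr)).mul continuous_const⟩
    with hF
  set p : ℝ → Matrix (Fin n) (Fin n) ℂ := fun t => cfcHom hnorm (F t) with hp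
  have hFcont : Continuous F := by
    apply ContinuousMap.continuous_of_continuous_uncurry
    show Continuous fun q : ℝ × spectrum ℂ u => Complex.exp ((q.1 : ℂ) * (θ q.2 : ℂ) * I)
    apply Complex.continuous_exp.comp
    exact ((Complex.continuous_ofReal.comp continuous_fst).mul
      (Complex.continuous_ofReal.comp (hθr.comp continuous_snd))).mul continuous_const
  have hpcont : Continuous p := (cfcHom_continuous hnorm).comp hFcont
  have hmem : ∀ t, p t ∈ unitary (Matrix (Fin n) (Fin n) ℂ) := by
    intro t
    have key : star (F t) * F t = 1 := by
      ext w
      simp only [ContinuousMap.coe_mk, ContinuousMap.mul_apply, ContinuousMap.star_apply,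
        ContinuousMap.one_apply, hF]
      rw [RCLike.star_def, ← Complex.exp_conj, ← Complex.exp_add, ← Complex.exp_zero]
      congr 1
      simp only [map_mul, Complex.conj_I, Complex.conj_ofReal]
      ring
    have key' : F t * star (F t) = 1 := by rw [mul_comm] at key; exact key
    rw [Unitary.mem_iff]
    constructor
    · show star (cfcHom hnorm (F t)) * cfcHom hnorm (F t) = 1
      rw [← map_star, ← map_mul, key, map_one]
    · show cfcHom hnorm (F t) * star (cfcHom hnorm (F t)) = 1
      rw [← map_star, ← map_mul, key', map_one]
  have hp0 : p 0 = 1 := by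
    have h0 : F 0 = 1 := by
      ext w
      simp [hF]
    show cfcHom hnorm (F 0) = 1
    rw [h0, map_one]
  have hp1 : p 1 = u := by
    have : F 1 = (ContinuousMap.id ℂ).restrict (spectrum ℂ u) := by
      ext w
      simp only [ContinuousMap.coe_mk, ContinuousMap.restrict_apply, ContinuousMap.id_apply, hF]
      rw [Complex.ofReal_one, one_mul]
      exact hθ w w.2
    show cfcHom hnorm (F 1) = u
    rw [this, cfcHom_id hnorm]
  exact ⟨⟨⟨fun t => ⟨p t, hmem t⟩,
    (hpcont.comp continuous_subtype_val).subtype_mk _⟩,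
    by ext; simp [hp0], by ext; simp [hp1]⟩⟩


lemma pcs : PathConnectedSpace (unitary (Matrix (Fin n) (Fin n) ℂ)) := by
  refine ⟨⟨1⟩, fun x y => ?_⟩
  exact (joined_one x).symm.trans (joined_one y)


end PC

section Main

variable {n N : ℕ}

lemma abs_of_unitary {z : ℂ} (hz : z ∈ unitary ℂ) : ‖z‖ = 1 := by
  have h1 : (starRingEnd ℂ) z * z = 1 := Unitary.star_mul_self_of_mem hz
  have h1' : z * (starRingEnd ℂ) z = 1 := by rw [mul_comm]; exact h1
  rw [Complex.mul_conj] at h1'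
  have h2 : Complex.normSq z = 1 := by exact_mod_cast h1'
  rw [Complex.norm_def, h2, Real.sqrt_one]

lemma mul_conj_of_unitary {z : ℂ} (hz : z ∈ unitary ℂ) : z * (starRingEnd ℂ) z = 1 := by
  rw [Complex.mul_conj]
  have := abs_of_unitary hz
  rw [Complex.norm_def] at this
  have h2 : Complex.normSq z = 1 := by
    nlinarith [Complex.normSq_nonneg z, Real.sq_sqrt (Complex.normSq_nonneg z)]
  exact_mod_cast congrArg (fun r : ℝ => (r : ℂ)) h2

/-- the diagonal matrix with a single (unimodular) nontrivial entry is unitary -/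
lemma diag_mem (i0 : Fin n) {c : ℂ} (hc : c * (starRingEnd ℂ) c = 1) :
    Matrix.diagonal (fun i : Fin n => if i = i0 then c else 1) ∈
      Matrix.unitaryGroup (Fin n) ℂ := by
  rw [Matrix.mem_unitaryGroup_iff]
  show _ * Matrix.conjTranspose _ = _
  rw [Matrix.diagonal_conjTranspose, Matrix.diagonal_mul_diagonal]
  have : (fun i : Fin n => (if i = i0 then c else 1) *
      star (if i = i0 then c else 1)) = fun _ => (1:ℂ) := by
    funext i
    by_cases h : i = i0 <;> simp [h]
    · exact hc
  rw [show (star fun i : Fin n => if i = i0 then c else 1) =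
      fun i : Fin n => star (if i = i0 then c else 1) from rfl]
  rw [show (fun i : Fin n => (if i = i0 then c else 1) * star (if i = i0 then c else 1)) = _ from this]
  exact Matrix.diagonal_one

lemma diag_det (i0 : Fin n) (c : ℂ) :
    Matrix.det (Matrix.diagonal (fun i : Fin n => if i = i0 then c else 1)) = c := by
  rw [Matrix.det_diagonal]
  rw [Finset.prod_ite_eq' Finset.univ i0 (fun _ => c)]
  simp

lemma exp_unimodular (r : ℝ) :
    Complex.exp ((r:ℂ) * I) * (starRingEnd ℂ) (Complex.exp ((r:ℂ) * I)) = 1 := by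
  rw [← Complex.exp_conj, map_mul, Complex.conj_I, Complex.conj_ofReal, ← Complex.exp_add]
  simp

end Main

section Dir

variable {n N : ℕ}

/-- The exhibiting map for the odd case. -/
noncomputable def G (n N : ℕ) (hn : 0 < n) :
    Matrix.unitaryGroup (Fin n) ℂ × ℝ → Matrix.unitaryGroup (Fin n) ℂ × Circle :=
  fun p =>
    (p.1 * ⟨Matrix.diagonal (fun i => if i = (⟨0, hn⟩ : Fin n) then
        Complex.exp (((N * p.2 : ℝ) : ℂ) * I) * (starRingEnd ℂ) (Matrix.det (p.1 : Matrix (Fin n) (Fin n) ℂ)) else 1),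
      diag_mem _ (by
        have h1 := exp_unimodular (N * p.2)
        have h2 := mul_conj_of_unitary (Matrix.det_of_mem_unitary p.1.2)
        rw [map_mul]
        calc Complex.exp (((N * p.2 : ℝ) : ℂ) * I) * (starRingEnd ℂ) (Matrix.det (p.1 : Matrix (Fin n) (Fin n) ℂ)) *
              ((starRingEnd ℂ) (Complex.exp (((N * p.2 : ℝ) : ℂ) * I)) * (starRingEnd ℂ) ((starRingEnd ℂ) (Matrix.det (p.1 : Matrix (Fin n) (Fin n) ℂ))))
            = (Complex.exp (((N * p.2 : ℝ) : ℂ) * I) * (starRingEnd ℂ) (Complex.exp (((N * p.2 : ℝ) : ℂ) * I))) *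
              ((starRingEnd ℂ) (Matrix.det (p.1 : Matrix (Fin n) (Fin n) ℂ)) * (starRingEnd ℂ) ((starRingEnd ℂ) (Matrix.det (p.1 : Matrix (Fin n) (Fin n) ℂ)))) := by ring
          _ = 1 := by
              rw [h1, Complex.conj_conj, one_mul, mul_comm]
              exact h2)⟩,
      Circle.exp (2 * p.2))

lemma G_det (hn : 0 < n) (p : Matrix.unitaryGroup (Fin n) ℂ × ℝ) :
    Matrix.det (((G n N hn p).1 : Matrix (Fin n) (Fin n) ℂ)) =
      Complex.exp (((N * p.2 : ℝ) : ℂ) * I) := by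
  show Matrix.det ((p.1 : Matrix (Fin n) (Fin n) ℂ) * _) = _
  rw [Matrix.det_mul, diag_det]
  have h2 := mul_conj_of_unitary (Matrix.det_of_mem_unitary p.1.2)
  calc Matrix.det (p.1 : Matrix (Fin n) (Fin n) ℂ) *
        (Complex.exp (((N * p.2 : ℝ) : ℂ) * I) * (starRingEnd ℂ) (Matrix.det (p.1 : Matrix (Fin n) (Fin n) ℂ)))
      = Complex.exp (((N * p.2 : ℝ) : ℂ) * I) *
        (Matrix.det (p.1 : Matrix (Fin n) (Fin n) ℂ) * (starRingEnd ℂ) (Matrix.det (p.1 : Matrix (Fin n) (Fin n) ℂ))) := by ring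
    _ = _ := by rw [h2, mul_one]

lemma G_cont (hn : 0 < n) : Continuous (G n N hn) := by
  apply Continuous.prodMk
  · apply Continuous.subtype_mk
    show Continuous fun p : Matrix.unitaryGroup (Fin n) ℂ × ℝ =>
      (p.1 : Matrix (Fin n) (Fin n) ℂ) * Matrix.diagonal (fun i => if i = (⟨0, hn⟩ : Fin n) then
        Complex.exp (((N * p.2 : ℝ) : ℂ) * I) * (starRingEnd ℂ) (Matrix.det (p.1 : Matrix (Fin n) (Fin n) ℂ)) else 1)
    apply Continuous.matrix_mul
    · exact continuous_subtype_val.comp continuous_fst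
    · apply Continuous.matrix_diagonal
      apply continuous_pi
      intro i
      by_cases h : i = (⟨0, hn⟩ : Fin n)
      · simp only [h, if_true]
        apply Continuous.mul
        · apply Complex.continuous_exp.comp
          apply Continuous.mul _ continuous_const
          exact Complex.continuous_ofReal.comp (continuous_const.mul continuous_snd)
        · exact Complex.continuous_conj.comp
            ((Continuous.matrix_det (continuous_subtype_val.comp continuous_fst)))
      · simp only [h, if_false]
        exact continuous_const
  · exact Circle.exp.continuous.comp (continuous_const.mul continuous_snd)

end Dir

section Dir2

variable {n N : ℕ}

lemma coe_circle_exp (t : ℝ) : ((Circle.exp t : Circle) : ℂ) = Complex.exp ((t:ℂ) * I) :=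
  Circle.coe_exp t

lemma G_mem (hn : 0 < n) (p : Matrix.unitaryGroup (Fin n) ℂ × ℝ) :
    G n N hn p ∈ {p : Matrix.unitaryGroup (Fin n) ℂ × Circle |
        (Matrix.det (p.1 : Matrix (Fin n) (Fin n) ℂ)) ^ 2 = ((p.2 : ℂ)) ^ N} := by
  show (Matrix.det (((G n N hn p).1 : Matrix (Fin n) (Fin n) ℂ))) ^ 2 = (((G n N hn p).2 : ℂ)) ^ N
  rw [G_det hn p]
  show _ = ((Circle.exp (2 * p.2) : Circle) : ℂ) ^ N
  rw [coe_circle_exp, ← Complex.exp_nat_mul, ← Complex.exp_nat_mul]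
  push_cast
  ring_nf

lemma G_surj (hn : 0 < n) (hodd : Odd N)
    (x : Matrix.unitaryGroup (Fin n) ℂ × Circle)
    (hx : (Matrix.det (x.1 : Matrix (Fin n) (Fin n) ℂ)) ^ 2 = ((x.2 : ℂ)) ^ N) :
    ∃ p, G n N hn p = x := by
  obtain ⟨A, q⟩ := x
  set t0 : ℝ := Complex.arg (q : ℂ) / 2 with ht0
  have hq : Circle.exp (2 * t0) = q := by
    rw [ht0]
    rw [show 2 * ((q:ℂ).arg / 2) = (q:ℂ).arg by ring]
    exact Circle.exp_arg q
  have hqc : ((q : ℂ)) = Complex.exp (((2 * t0 : ℝ):ℂ) * I) := by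
    rw [← coe_circle_exp, hq]
  have hsq : (Matrix.det (A : Matrix (Fin n) (Fin n) ℂ)) ^ 2 =
      (Complex.exp (((N * t0 : ℝ) : ℂ) * I)) ^ 2 := by
    rw [hx, hqc, ← Complex.exp_nat_mul, ← Complex.exp_nat_mul]
    congr 1
    push_cast
    ring
  have hcases : Matrix.det (A : Matrix (Fin n) (Fin n) ℂ) = Complex.exp (((N * t0 : ℝ) : ℂ) * I) ∨
      Matrix.det (A : Matrix (Fin n) (Fin n) ℂ) = -Complex.exp (((N * t0 : ℝ) : ℂ) * I) := by
    have := hsq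
    rw [sq, sq] at this
    exact mul_self_eq_mul_self_iff.mp this
  -- in either case find t with det A = exp((N*t) I) and Circle.exp (2 t) = q
  have key : ∃ t : ℝ, Matrix.det (A : Matrix (Fin n) (Fin n) ℂ) =
      Complex.exp (((N * t : ℝ) : ℂ) * I) ∧ Circle.exp (2 * t) = q := by
    rcases hcases with h | h
    · exact ⟨t0, h, hq⟩
    · refine ⟨t0 + Real.pi, ?_, ?_⟩
      · rw [h]
        have : ((N * (t0 + Real.pi) : ℝ) : ℂ) * I =
            ((N * t0 : ℝ) : ℂ) * I + (N : ℕ) * (Real.pi * I) := by push_cast; ring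
        rw [this, Complex.exp_add, Complex.exp_nat_mul]
        rw [show ((Real.pi : ℂ)) * I = Real.pi * I from rfl, Complex.exp_pi_mul_I]
        rw [hodd.neg_one_pow]
        ring
      · rw [show 2 * (t0 + Real.pi) = 2 * t0 + 2 * Real.pi by ring]
        rw [Circle.exp_add_two_pi]
        exact hq
  obtain ⟨t, hdet, hqt⟩ := key
  refine ⟨(A, t), ?_⟩
  have hone : (fun i : Fin n => if i = (⟨0, hn⟩ : Fin n) then
      Complex.exp (((N * t : ℝ) : ℂ) * I) * (starRingEnd ℂ) (Matrix.det (A : Matrix (Fin n) (Fin n) ℂ)) else 1) =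
      fun _ => (1:ℂ) := by
    funext i
    by_cases h : i = (⟨0, hn⟩ : Fin n) <;> simp only [h, if_true, if_false]
    rw [hdet]
    exact exp_unimodular (N * t)
  show (_, Circle.exp (2 * t)) = (A, q)
  refine Prod.ext ?_ (by rw [hqt])
  apply Subtype.ext
  show (A : Matrix (Fin n) (Fin n) ℂ) * Matrix.diagonal (fun i : Fin n => if i = (⟨0, hn⟩ : Fin n) then
      Complex.exp (((N * t : ℝ) : ℂ) * I) * (starRingEnd ℂ) (Matrix.det (A : Matrix (Fin n) (Fin n) ℂ)) else 1)
      = (A : Matrix (Fin n) (Fin n) ℂ)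
  rw [hone, Matrix.diagonal_one, mul_one]

end Dir2

section Final

lemma odd_conn (n N : ℕ) (hn : 0 < n) (hodd : Odd N) :
    IsConnected {p : Matrix.unitaryGroup (Fin n) ℂ × Circle |
        (Matrix.det (p.1 : Matrix (Fin n) (Fin n) ℂ)) ^ 2 = ((p.2 : ℂ)) ^ N} := by
  haveI : PathConnectedSpace (Matrix.unitaryGroup (Fin n) ℂ) := pcs
  have hS : {p : Matrix.unitaryGroup (Fin n) ℂ × Circle |
        (Matrix.det (p.1 : Matrix (Fin n) (Fin n) ℂ)) ^ 2 = ((p.2 : ℂ)) ^ N} =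
      Set.range (G n N hn) := by
    ext x
    constructor
    · intro hx
      exact G_surj hn hodd x hx
    · rintro ⟨p, rfl⟩
      exact G_mem hn p
  rw [hS]
  exact isConnected_range (G_cont hn)

lemma even_not_conn (n N : ℕ) (hn : 0 < n) (heven : Even N) (hN : 0 < N)
    (h : IsConnected {p : Matrix.unitaryGroup (Fin n) ℂ × Circle |
        (Matrix.det (p.1 : Matrix (Fin n) (Fin n) ℂ)) ^ 2 = ((p.2 : ℂ)) ^ N}) : False := by
  obtain ⟨m, hm⟩ := heven
  have hNm : N = 2 * m := by omega
  set S := {p : Matrix.unitaryGroup (Fin n) ℂ × Circle |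
      (Matrix.det (p.1 : Matrix (Fin n) (Fin n) ℂ)) ^ 2 = ((p.2 : ℂ)) ^ N} with hSdef
  set f : Matrix.unitaryGroup (Fin n) ℂ × Circle → ℝ :=
    fun p => (Matrix.det (p.1 : Matrix (Fin n) (Fin n) ℂ) * ((starRingEnd ℂ) ((p.2 : ℂ))) ^ m).re
    with hf
  have hfc : Continuous f := by
    apply Complex.continuous_re.comp
    apply Continuous.mul
    · exact Continuous.matrix_det (continuous_subtype_val.comp continuous_fst)
    · exact (Complex.continuous_conj.comp (continuous_subtype_val.comp continuous_snd)).pow m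
  have himg : IsPreconnected (f '' S) :=
    (h.image f hfc.continuousOn).isPreconnected
  -- the value of f on S is ±1
  have hval : ∀ p ∈ S, f p = 1 ∨ f p = -1 := by
    intro p hp
    have hq : ((p.2 : ℂ)) * (starRingEnd ℂ) ((p.2 : ℂ)) = 1 := by
      rw [Complex.mul_conj]
      rw [Circle.normSq_coe]
      norm_num
    set w : ℂ := Matrix.det (p.1 : Matrix (Fin n) (Fin n) ℂ) * ((starRingEnd ℂ) ((p.2 : ℂ))) ^ m with hw
    have hw2 : w * w = 1 := by
      have hp' : (Matrix.det (p.1 : Matrix (Fin n) (Fin n) ℂ)) ^ 2 = ((p.2 : ℂ)) ^ N := hp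
      calc w * w = (Matrix.det (p.1 : Matrix (Fin n) (Fin n) ℂ)) ^ 2 *
            ((starRingEnd ℂ) ((p.2 : ℂ))) ^ (2 * m) := by rw [hw]; ring
        _ = ((p.2 : ℂ)) ^ (2 * m) * ((starRingEnd ℂ) ((p.2 : ℂ))) ^ (2 * m) := by
            rw [hp', hNm]
        _ = (((p.2 : ℂ)) * (starRingEnd ℂ) ((p.2 : ℂ))) ^ (2 * m) := by rw [mul_pow]
        _ = 1 := by rw [hq, one_pow]
    have : w = 1 ∨ w = -1 := by
      have := mul_self_eq_mul_self_iff.mp (by rw [hw2]; ring_nf : w * w = 1 * 1)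
      simpa using this
    rcases this with hc | hc
    · left; rw [hf]; simp only [← hw, hc, Complex.one_re]
    · right; rw [hf]; simp only [← hw, hc]; simp
  -- 1 and -1 are both attained
  have h1 : (1:ℝ) ∈ f '' S := by
    refine ⟨(1, 1), ?_, ?_⟩
    · show (Matrix.det ((1 : Matrix.unitaryGroup (Fin n) ℂ) : Matrix (Fin n) (Fin n) ℂ)) ^ 2
        = (((1 : Circle) : ℂ)) ^ N
      simp
    · rw [hf]
      simp
  have hneg : (-1:ℝ) ∈ f '' S := by
    have hmem : Matrix.diagonal (fun i : Fin n => if i = (⟨0, hn⟩ : Fin n) then (-1:ℂ) else 1) ∈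
        Matrix.unitaryGroup (Fin n) ℂ := diag_mem _ (by simp)
    refine ⟨(⟨_, hmem⟩, 1), ?_, ?_⟩
    · show (Matrix.det (Matrix.diagonal (fun i : Fin n => if i = (⟨0, hn⟩ : Fin n) then (-1:ℂ) else 1))) ^ 2
        = (((1 : Circle) : ℂ)) ^ N
      rw [diag_det]
      simp
    · show ((Matrix.diagonal fun i : Fin n => if i = (⟨0, hn⟩ : Fin n) then (-1:ℂ) else 1).det *
          (starRingEnd ℂ) ((1 : Circle) : ℂ) ^ m).re = -1
      rw [diag_det]
      simp
  have h0 : (0:ℝ) ∈ f '' S := himg.Icc_subset hneg h1 (by norm_num)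
  obtain ⟨p, hpS, hp0⟩ := h0
  rcases hval p hpS with h' | h' <;> rw [h'] at hp0 <;> norm_num at hp0

/-- For finite `N ≥ 1` and `n ≥ 1`, the group
`U^N(n) = {(Φ,q) ∈ U(n) × S¹ | det(Φ)² = q^N}` is connected if and only if `N` is odd. -/
theorem stmt_4 (n N : ℕ) (hn : 0 < n) (hN : 0 < N) :
    IsConnected {p : Matrix.unitaryGroup (Fin n) ℂ × Circle |
        (Matrix.det (p.1 : Matrix (Fin n) (Fin n) ℂ)) ^ 2 = ((p.2 : ℂ)) ^ N}
      ↔ Odd N := by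
  constructor
  · intro h
    by_contra hodd
    exact even_not_conn n N hn (Nat.not_odd_iff_even.mp hodd) hN h
  · intro hodd
    exact odd_conn n N hn hodd

end Final
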